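/- Let n ≥ 2, 2 < p < ∞, ξ = n + p − 4 (so ξ > 0), z ∈ ℝⁿ, a, b > 0 and c ∈ ℝ, and define w(x) = −a|x−z|² − b|x−z|^{−ξ} + c for x ∈ ℝⁿ, x ≠ z. Then for every x ≠ z, the largest eigenvalue of the Hessian D²w(x) satisfies sup_{|σ|=1} ⟨D²w(x)σ, σ⟩ = −2a + bξ|x−z|^{−ξ−2}, where the supremum is over unit vectors σ ∈ ℝⁿ. -/

import Mathlib

open MeasureTheory Metric Set


lemma rpow_norm_hasFDerivAt {n : ℕ} (s : ℝ) (z y : EuclideanSpace ℝ (Fin n)) (hy : y ≠ z) :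
    HasFDerivAt (fun x : EuclideanSpace ℝ (Fin n) => ‖x - z‖ ^ s)
      ((s * ‖y - z‖ ^ (s - 2)) • innerSL ℝ (y - z)) y := by
  have hv : y - z ≠ 0 := sub_ne_zero.mpr hy
  have hr : (0:ℝ) < ‖y - z‖ := norm_pos_iff.mpr hv
  have h1 : HasFDerivAt (fun x : EuclideanSpace ℝ (Fin n) => ‖x - z‖ ^ 2)
      (2 • innerSL ℝ (y - z)) y := by
    simpa using ((hasFDerivAt_id y).sub_const z).norm_sq
  have hne : ‖y - z‖ ^ 2 ≠ 0 := pow_ne_zero _ hr.ne'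
  have h2' := h1.rpow_const (p := s/2) (Or.inl hne)
  have key : ∀ t : ℝ, ∀ x : EuclideanSpace ℝ (Fin n),
      (‖x - z‖ ^ 2) ^ (t/2) = ‖x - z‖ ^ t := by
    intro t x
    rw [← Real.rpow_natCast ‖x - z‖ 2, ← Real.rpow_mul (norm_nonneg _),
      show ((2:ℕ):ℝ) * (t/2) = t by push_cast; ring]
  have heq : (fun x : EuclideanSpace ℝ (Fin n) => (‖x - z‖ ^ 2) ^ (s/2))
      = fun x => ‖x - z‖ ^ s := by
    funext x; exact key _ x
  rw [heq] at h2'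
  have hexp : (‖y - z‖ ^ 2 : ℝ) ^ (s/2 - 1) = ‖y - z‖ ^ (s - 2) := by
    rw [← Real.rpow_natCast ‖y - z‖ 2, ← Real.rpow_mul (norm_nonneg _),
      show ((2:ℕ):ℝ) * (s/2 - 1) = s - 2 by push_cast; ring]
  refine h2'.congr_fderiv ?_
  ext w
  simp [hexp]
  ring

lemma barrier_hasFDerivAt {n : ℕ} (ξ a b c : ℝ) (z y : EuclideanSpace ℝ (Fin n)) (hy : y ≠ z) :
    HasFDerivAt (fun x : EuclideanSpace ℝ (Fin n) =>
        -a * ‖x - z‖ ^ 2 - b * ‖x - z‖ ^ (-ξ) + c)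
      ((-2 * a + b * ξ * ‖y - z‖ ^ (-ξ - 2)) • innerSL ℝ (y - z)) y := by
  have hv : y - z ≠ 0 := sub_ne_zero.mpr hy
  have h1 : HasFDerivAt (fun x : EuclideanSpace ℝ (Fin n) => ‖x - z‖ ^ 2)
      (2 • innerSL ℝ (y - z)) y := by
    simpa using ((hasFDerivAt_id y).sub_const z).norm_sq
  have h2 := rpow_norm_hasFDerivAt (-ξ) z y hy
  have := ((h1.const_mul (-a)).sub (h2.const_mul b)).add_const c
  refine this.congr_fderiv ?_
  ext w
  simp [smul_smul]
  ring

-- second derivative quadratic form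
lemma barrier_hessian_apply {n : ℕ} (ξ a b c : ℝ) (z x : EuclideanSpace ℝ (Fin n))
    (hx : x ≠ z) (σ : EuclideanSpace ℝ (Fin n)) :
    fderiv ℝ (fderiv ℝ (fun x : EuclideanSpace ℝ (Fin n) =>
        -a * ‖x - z‖ ^ 2 - b * ‖x - z‖ ^ (-ξ) + c)) x σ σ =
      (-2 * a + b * ξ * ‖x - z‖ ^ (-ξ - 2)) * ‖σ‖ ^ 2
        - b * ξ * (ξ + 2) * ‖x - z‖ ^ (-ξ - 4) * inner ℝ (x - z) σ * inner ℝ (x - z) σ := by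
  set G : EuclideanSpace ℝ (Fin n) → (EuclideanSpace ℝ (Fin n) →L[ℝ] ℝ) :=
    fun y => (-2 * a + b * ξ * ‖y - z‖ ^ (-ξ - 2)) • innerSL ℝ (y - z) with hGdef
  have hev : fderiv ℝ (fun x : EuclideanSpace ℝ (Fin n) =>
      -a * ‖x - z‖ ^ 2 - b * ‖x - z‖ ^ (-ξ) + c) =ᶠ[nhds x] G := by
    filter_upwards [IsOpen.mem_nhds isOpen_ne hx] with y hy
    exact (barrier_hasFDerivAt ξ a b c z y hy).fderiv
  rw [hev.fderiv_eq]
  -- derivative of the scalar coefficient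
  have hc : HasFDerivAt (fun y : EuclideanSpace ℝ (Fin n) =>
      -2 * a + b * ξ * ‖y - z‖ ^ (-ξ - 2))
      ((b * ξ) • (((-ξ - 2) * ‖x - z‖ ^ (-ξ - 2 - 2)) • innerSL ℝ (x - z))) x :=
    ((rpow_norm_hasFDerivAt (-ξ - 2) z x hx).const_mul (b * ξ)).const_add (-2 * a)
  have hL : HasFDerivAt (fun y : EuclideanSpace ℝ (Fin n) => innerSL ℝ (y - z))
      (innerSL ℝ (E := EuclideanSpace ℝ (Fin n))) x := by
    have h := (innerSL ℝ (E := EuclideanSpace ℝ (Fin n))).hasFDerivAt.comp x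
      ((hasFDerivAt_id x).sub_const z)
    rw [ContinuousLinearMap.comp_id] at h
    exact h
  have hG := hc.smul hL
  rw [show fderiv ℝ G x = _ from hG.fderiv]
  have h4 : ‖x - z‖ ^ (-ξ - 2 - 2) = ‖x - z‖ ^ (-ξ - 4) := by congr 1; ring
  simp only [ContinuousLinearMap.add_apply, ContinuousLinearMap.smul_apply,
    ContinuousLinearMap.smulRight_apply, innerSL_apply_apply, smul_eq_mul,
    real_inner_self_eq_norm_sq, h4]
  have h5 : ((innerSL ℝ (E := EuclideanSpace ℝ (Fin n))) σ) σ = ‖σ‖ ^ 2 :=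
    real_inner_self_eq_norm_sq σ
  rw [h5]
  ring

/-- **Largest Hessian eigenvalue of the radial barrier.** For `ξ = n + p − 4 > 0` and
`w(x) = −a|x−z|² − b|x−z|^{−ξ} + c`, for all `x ≠ z` one has
`sup_{|σ|=1} ⟨D²w(x)σ, σ⟩ = −2a + bξ|x−z|^{−ξ−2}`. -/
theorem barrier_largest_eigenvalue
    (n : ℕ) (hn : 2 ≤ n) (p : ℝ) (hp : 2 < p)
    (z : EuclideanSpace ℝ (Fin n)) (a b c : ℝ) (ha : 0 < a) (hb : 0 < b)
    (x : EuclideanSpace ℝ (Fin n)) (hx : x ≠ z) :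
    (⨆ σ : sphere (0 : EuclideanSpace ℝ (Fin n)) 1,
      fderiv ℝ (fderiv ℝ (fun x : EuclideanSpace ℝ (Fin n) =>
        -a * ‖x - z‖ ^ 2 - b * ‖x - z‖ ^ (-((n : ℝ) + p - 4)) + c)) x
        (σ : EuclideanSpace ℝ (Fin n)) (σ : EuclideanSpace ℝ (Fin n))) =
      -2 * a + b * ((n : ℝ) + p - 4) * ‖x - z‖ ^ (-((n : ℝ) + p - 4) - 2) := by
  set ξ : ℝ := (n : ℝ) + p - 4 with hξdef
  have hn2 : (2:ℝ) ≤ (n:ℝ) := by exact_mod_cast hn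
  have hξ : 0 < ξ := by simp only [hξdef]; linarith
  have hv : x - z ≠ 0 := sub_ne_zero.mpr hx
  have hr : (0:ℝ) < ‖x - z‖ := norm_pos_iff.mpr hv
  set M : ℝ := -2 * a + b * ξ * ‖x - z‖ ^ (-ξ - 2) with hMdef
  set K : ℝ := b * ξ * (ξ + 2) * ‖x - z‖ ^ (-ξ - 4) with hKdef
  have hK : 0 ≤ K := by
    have := Real.rpow_pos_of_pos hr (-ξ - 4)
    positivity
  set F : sphere (0 : EuclideanSpace ℝ (Fin n)) 1 → ℝ := fun σ =>
    fderiv ℝ (fderiv ℝ (fun x : EuclideanSpace ℝ (Fin n) =>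
        -a * ‖x - z‖ ^ 2 - b * ‖x - z‖ ^ (-ξ) + c)) x
        (σ : EuclideanSpace ℝ (Fin n)) (σ : EuclideanSpace ℝ (Fin n)) with hFdef
  have hFval : ∀ σ : sphere (0 : EuclideanSpace ℝ (Fin n)) 1,
      F σ = M - K * (inner ℝ (x - z) (σ : EuclideanSpace ℝ (Fin n)) : ℝ) ^ 2 := by
    intro σ
    have hσ : ‖(σ : EuclideanSpace ℝ (Fin n))‖ = 1 := mem_sphere_zero_iff_norm.mp σ.2
    rw [hFdef]
    simp only
    rw [barrier_hessian_apply ξ a b c z x hx, hσ]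
    ring
  -- orthogonal unit vector
  obtain ⟨w, hw0, hworth⟩ : ∃ w : EuclideanSpace ℝ (Fin n), w ≠ 0 ∧
      (inner ℝ (x - z) w : ℝ) = 0 := by
    have hfr : 0 < Module.finrank ℝ ((ℝ ∙ (x - z))ᗮ :
        Submodule ℝ (EuclideanSpace ℝ (Fin n))) := by
      have h1 := Submodule.finrank_add_finrank_orthogonal (K := (ℝ ∙ (x - z)))
      rw [finrank_span_singleton hv] at h1
      have h2 : Module.finrank ℝ (EuclideanSpace ℝ (Fin n)) = n := by
        simp [finrank_euclideanSpace]
      omega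
    have : Nontrivial ((ℝ ∙ (x - z))ᗮ : Submodule ℝ (EuclideanSpace ℝ (Fin n))) :=
      Module.nontrivial_of_finrank_pos hfr
    obtain ⟨w, hw⟩ := exists_ne (0 : ((ℝ ∙ (x - z))ᗮ : Submodule ℝ (EuclideanSpace ℝ (Fin n))))
    refine ⟨w, by simpa using hw, ?_⟩
    have := w.2
    rw [Submodule.mem_orthogonal] at this
    exact this (x - z) (Submodule.mem_span_singleton_self _)
  set σ₀ : EuclideanSpace ℝ (Fin n) := ‖w‖⁻¹ • w with hσ₀def
  have hσ₀norm : ‖σ₀‖ = 1 := by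
    rw [hσ₀def, norm_smul, norm_inv, norm_norm, inv_mul_cancel₀ (norm_ne_zero_iff.mpr hw0)]
  have hσ₀mem : σ₀ ∈ sphere (0 : EuclideanSpace ℝ (Fin n)) 1 :=
    mem_sphere_zero_iff_norm.mpr hσ₀norm
  have hσ₀orth : (inner ℝ (x - z) σ₀ : ℝ) = 0 := by
    rw [hσ₀def, real_inner_smul_right, hworth, mul_zero]
  have hgreat : IsGreatest (Set.range F) M := by
    constructor
    · exact ⟨⟨σ₀, hσ₀mem⟩, by rw [hFval]; simp [hσ₀orth]⟩
    · rintro y ⟨σ, rfl⟩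
      rw [hFval]
      nlinarith [sq_nonneg (inner ℝ (x - z) (σ : EuclideanSpace ℝ (Fin n)) : ℝ)]
  exact hgreat.csSup_eq
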